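/- arXiv:2110.15431 — 2 statements merged into one kernel-verified Lean document; each statement's English description precedes it below -/
import Mathlib

section
/- Let x, y be two comparable points in a finite topological space X (i.e., x ≤ y or y ≤ x in the specialization preorder). Then there exists a path from x to y in X, i.e., a continuous map α : [0,1] → X with α(0) = x and α(1) = y. -/
/-- The specialization preorder: `x ≤ y` iff `x` lies in every open set containing `y`. -/
def specLE {X : Type*} [TopologicalSpace X] (x y : X) : Prop :=
  ∀ U : Set X, IsOpen U → y ∈ U → x ∈ U

/-- Comparable points in a finite topological space are joined by a path. -/
theorem path_of_comparable {X : Type*} [TopologicalSpace X] [Finite X] (x y : X)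
    (h : specLE x y ∨ specLE y x) :
    ∃ α : unitInterval → X, Continuous α ∧ α 0 = x ∧ α 1 = y := by
  have h' : x ⤳ y ∨ y ⤳ x := by
    simpa [specLE, specializes_iff_forall_open] using h
  have hj : Joined x y := by
    rcases h' with h' | h'
    · exact (h'.joinedIn (Set.mem_univ x) (Set.mem_univ y)).joined
    · exact ((h'.joinedIn (Set.mem_univ y) (Set.mem_univ x)).joined).symm
  obtain ⟨γ⟩ := hj
  exact ⟨γ, γ.continuous, γ.source, γ.target⟩
end

section
/- For a finite topological space X, the following are equivalent: (i) X is connected; (ii) X is order-connected (any two points can be joined by a fence, i.e., a finite sequence in which consecutive elements are comparable in the specialization preorder); (iii) X is path-connected. -/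
/-- A fence from `x` to `y`: a finite sequence starting at `x` and ending at `y` in which
consecutive elements are comparable in the specialization preorder. -/
def Fence {X : Type*} [TopologicalSpace X] (x y : X) : Prop :=
  ∃ (n : ℕ) (c : Fin (n + 1) → X), c 0 = x ∧ c (Fin.last n) = y ∧
    ∀ i : Fin n, specLE (c i.castSucc) (c i.succ) ∨ specLE (c i.succ) (c i.castSucc)

private def Cmp {X : Type*} [TopologicalSpace X] (x y : X) : Prop :=
  specLE x y ∨ specLE y x

private lemma specLE_iff {X : Type*} [TopologicalSpace X] {x y : X} :
    specLE x y ↔ x ⤳ y := specializes_iff_forall_open.symm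

private lemma fence_iff {X : Type*} [TopologicalSpace X] {x y : X} :
    Fence x y ↔ Relation.ReflTransGen Cmp x y := by
  constructor
  · rintro ⟨n, c, h0, hl, hstep⟩
    subst h0 hl
    induction n with
    | zero => exact Relation.ReflTransGen.refl
    | succ m ih =>
      have step := hstep (Fin.last m)
      have tailstep : Cmp (c (Fin.last m).castSucc) (c (Fin.last (m + 1))) := by
        have : (Fin.last m).succ = Fin.last (m + 1) := rfl
        rw [← this]; exact step
      have ihres := ih (c ∘ Fin.castSucc) (fun i => by
        have := hstep i.castSucc
        simpa only [Function.comp_apply, Fin.succ_castSucc] using this)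
      simp only [Function.comp] at ihres
      have h0' : (Fin.castSucc (0 : Fin (m + 1))) = (0 : Fin (m + 2)) := rfl
      rw [h0'] at ihres
      exact ihres.tail tailstep
  · intro h
    induction h with
    | refl => exact ⟨0, fun _ => x, rfl, rfl, fun i => i.elim0⟩
    | tail _ hR ih =>
      obtain ⟨n, c, h0, hl, hstep⟩ := ih
      rename_i b z _
      refine ⟨n + 1, fun i => if h : (i : ℕ) < n + 1 then c ⟨i, h⟩ else z, ?_, ?_, ?_⟩
      · simpa using h0
      · simp [Fin.last]
      · intro i
        have hc : ((i.castSucc : Fin (n + 2)) : ℕ) = (i : ℕ) := rfl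
        have hs : ((i.succ : Fin (n + 2)) : ℕ) = (i : ℕ) + 1 := rfl
        by_cases hi : (i : ℕ) < n
        · have h1 : ((i.castSucc : Fin (n + 2)) : ℕ) < n + 1 := by omega
          have h2 : ((i.succ : Fin (n + 2)) : ℕ) < n + 1 := by omega
          simp only [dif_pos h1, dif_pos h2]
          have := hstep ⟨(i : ℕ), hi⟩
          convert this using 3 <;> rfl
        · have hin : (i : ℕ) = n := by omega
          have h1 : ((i.castSucc : Fin (n + 2)) : ℕ) < n + 1 := by omega
          have h2 : ¬ ((i.succ : Fin (n + 2)) : ℕ) < n + 1 := by omega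
          simp only [dif_pos h1, dif_neg h2]
          have hb : c ⟨((i.castSucc : Fin (n + 2)) : ℕ), h1⟩ = b := by
            rw [← hl]; congr 1; apply Fin.ext; simp [hc, hin, Fin.last]
          rw [hb]; exact hR

/-- For a (nonempty) finite topological space, connectedness, order-connectedness and
path-connectedness are equivalent. -/
theorem finite_space_connected_iff_orderConnected_iff_pathConnected
    (X : Type*) [TopologicalSpace X] [Finite X] [Nonempty X] :
    (ConnectedSpace X ↔ ∀ x y : X, Fence x y) ∧
    (ConnectedSpace X ↔ PathConnectedSpace X) := by
  -- minimal open neighbourhoods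
  have minOpen : ∀ y : X, ∃ U : Set X, IsOpen U ∧ y ∈ U ∧ ∀ z ∈ U, specLE z y := by
    intro y
    refine ⟨⋂₀ {U : Set X | IsOpen U ∧ y ∈ U}, ?_, ?_, ?_⟩
    · exact Set.Finite.isOpen_sInter (Set.toFinite _) (fun t ht => ht.1)
    · exact fun U hU => hU.2
    · intro z hz U hU hyU
      exact hz _ ⟨hU, hyU⟩
  have conn_to_fence : ConnectedSpace X → ∀ x y : X, Fence x y := by
    intro hc x y
    rw [fence_iff]
    set S := {y : X | Relation.ReflTransGen Cmp x y} with hS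
    have hSopen : IsOpen S := by
      rw [isOpen_iff_forall_mem_open]
      intro a ha
      obtain ⟨U, hUo, haU, hUle⟩ := minOpen a
      exact ⟨U, fun z hz => ha.tail (Or.inr (hUle z hz)), hUo, haU⟩
    have hScopen : IsOpen Sᶜ := by
      rw [isOpen_iff_forall_mem_open]
      intro a ha
      obtain ⟨U, hUo, haU, hUle⟩ := minOpen a
      refine ⟨U, fun z hz hzS => ha ?_, hUo, haU⟩
      exact hzS.tail (Or.inl (hUle z hz))
    have : S = Set.univ ∨ S = ∅ := by
      rcases (isClopen_iff.mp ⟨⟨hScopen⟩, hSopen⟩) with h | h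
      · exact Or.inr h
      · exact Or.inl h
    rcases this with h | h
    · have : y ∈ S := h ▸ Set.mem_univ y
      exact this
    · exact absurd (h ▸ (show x ∈ S from Relation.ReflTransGen.refl)) (Set.notMem_empty x)
  have fence_to_path : (∀ x y : X, Fence x y) → PathConnectedSpace X := by
    intro hf
    refine ⟨inferInstance, fun x y => ?_⟩
    have h := (fence_iff).mp (hf x y)
    induction h with
    | refl => exact Joined.refl x
    | tail _ hR ih =>
      refine ih.trans ?_
      rcases hR with h | h
      · exact joinedIn_univ.mp
          ((specLE_iff.mp h).joinedIn (Set.mem_univ _) (Set.mem_univ _))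
      · exact (joinedIn_univ.mp
          ((specLE_iff.mp h).joinedIn (Set.mem_univ _) (Set.mem_univ _))).symm
  refine ⟨⟨conn_to_fence, fun h => ?_⟩, ⟨fun h => (fence_to_path (conn_to_fence h)), fun h => ?_⟩⟩
  · have := fence_to_path h
    exact PathConnectedSpace.connectedSpace
  · exact PathConnectedSpace.connectedSpace
end
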